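/- Let K ≥ 2, d ≥ 1, γ > 0, and let D, Q be the Kd×Kd matrices defined from γ as below; set J := diag(0,1,…,1) ⊗ I_d and A := −(D+Q)·J, and let e_2 ∈ ℝ^K be the second standard basis vector. Let U : ℝ^d → ℝ be differentiable with ∇U L-Lipschitz, L > 0. Fix M ≥ 1 nodes 0 ≤ c_1 < ⋯ < c_M ≤ 1 with Lagrange basis polynomials ℓ_1,…,ℓ_M and Lebesgue constant Γ_φ := sup_{τ∈[0,1]} ∑_{j=1}^M |ℓ_j(τ)|. Fix h > 0, y ∈ ℝ^{Kd} and a continuous W : [0,h] → ℝ^{Kd}, and for a continuous path X : [0,h] → ℝ^{Kd} with first d-dimensional block X_1 define P(s; X) := ∑_{j=1}^M ℓ_j(s/h)·∇U(X_1(c_j h)) for s ∈ [0,h]. Suppose X̃, Ỹ : [0,h] → ℝ^{Kd} are continuous and satisfy X̃(t) = y + ∫_0^t A X̃(s) ds − ∫_0^t (e_2 ⊗ I_d)·P(s; X) ds + W(t) and Ỹ(t) = y + ∫_0^t A Ỹ(s) ds − ∫_0^t (e_2 ⊗ I_d)·P(s; Y) ds + W(t) for all t ∈ [0,h], for continuous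 paths X, Y. Then sup_{t∈[0,h]} ‖X̃(t) − Ỹ(t)‖ ≤ e^{‖A‖h} · L · Γ_φ · h · sup_{t∈[0,h]} ‖X(t) − Y(t)‖. -/

import Mathlib

open Matrix Kronecker

/-- The operator norm (induced by the Euclidean norms) of a real matrix. -/
noncomputable def opNorm {m n : Type*} [Fintype m] [Fintype n] [DecidableEq n]
    (M : Matrix m n ℝ) : ℝ :=
  ‖LinearMap.toContinuousLinearMap (Matrix.toEuclideanLin M)‖


lemma gronwall_aux (Kn e t h : ℝ) (hK : 0 ≤ Kn) (he : 0 ≤ e) (ht : 0 ≤ t) (hth : t ≤ h) :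
    gronwallBound 0 Kn e t ≤ Real.exp (Kn * h) * e * h := by
  rcases eq_or_lt_of_le hK with hK0 | hKpos
  · rw [← hK0, gronwallBound_K0]
    simp only [zero_mul, Real.exp_zero, one_mul, zero_add]
    nlinarith
  · rw [gronwallBound_of_K_ne_0 (ne_of_gt hKpos)]
    have h1 : Real.exp (Kn * t) - 1 ≤ (Kn * t) * Real.exp (Kn * t) := by
      have := Real.add_one_le_exp (-(Kn * t))
      have hp := Real.exp_pos (Kn * t)
      have hmul : Real.exp (-(Kn*t)) * Real.exp (Kn*t) = 1 := by
        rw [← Real.exp_add]; simp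
      nlinarith
    have h2 : Real.exp (Kn * t) ≤ Real.exp (Kn * h) :=
      Real.exp_le_exp.2 (by nlinarith)
    have hp := Real.exp_pos (Kn * t)
    have hdiv : e / Kn * (Real.exp (Kn * t) - 1) ≤ e * t * Real.exp (Kn * t) := by
      rw [div_mul_eq_mul_div, div_le_iff₀ hKpos]
      nlinarith
    have h3 : e * t * Real.exp (Kn * t) ≤ e * t * Real.exp (Kn * h) :=
      mul_le_mul_of_nonneg_left h2 (mul_nonneg he ht)
    have h4 : e * t * Real.exp (Kn * h) ≤ e * h * Real.exp (Kn * h) :=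
      mul_le_mul_of_nonneg_right (mul_le_mul_of_nonneg_left hth he) (Real.exp_pos _).le
    nlinarith

set_option maxHeartbeats 2000000 in
set_option synthInstance.maxHeartbeats 400000 in
theorem stmt10 (K d : ℕ) (hK : 2 ≤ K) (hd : 1 ≤ d) (γ : ℝ) (hγ : 0 < γ)
    (Tγ : Matrix (Fin K) (Fin K) ℝ)
    (hT : ∀ i j : Fin K,
      Tγ i j =
        if (i : ℕ) + 1 = (j : ℕ) then (if (i : ℕ) = 0 then -1 else -γ)
        else if (j : ℕ) + 1 = (i : ℕ) then (if (j : ℕ) = 0 then 1 else γ)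
        else 0)
    (D Q J A : Matrix (Fin K × Fin d) (Fin K × Fin d) ℝ)
    (hD : D = (Matrix.diagonal fun i : Fin K => if (i : ℕ) = K - 1 then γ else 0) ⊗ₖ
        (1 : Matrix (Fin d) (Fin d) ℝ))
    (hQ : Q = Tγ ⊗ₖ (1 : Matrix (Fin d) (Fin d) ℝ))
    (hJ : J = (Matrix.diagonal fun i : Fin K => if (i : ℕ) = 0 then (0 : ℝ) else 1) ⊗ₖ
        (1 : Matrix (Fin d) (Fin d) ℝ))
    (hA : A = -((D + Q) * J))
    -- `e₂ ⊗ I_d` viewed as the embedding of `ℝ^d` into the second block of `ℝ^{Kd}`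
    (emb2 : EuclideanSpace ℝ (Fin d) → EuclideanSpace ℝ (Fin K × Fin d))
    (hemb2 : ∀ v p, emb2 v p = if (p.1 : ℕ) = 1 then v p.2 else 0)
    (U : EuclideanSpace ℝ (Fin d) → ℝ) (hUdiff : Differentiable ℝ U)
    (L : ℝ) (hL : 0 < L)
    (hLip : ∀ a b, ‖gradient U a - gradient U b‖ ≤ L * ‖a - b‖)
    -- nodes `0 ≤ c₁ < ⋯ < c_M ≤ 1`
    (M : ℕ) (hM : 1 ≤ M) (c : Fin M → ℝ)
    (hc : ∀ j, c j ∈ Set.Icc (0 : ℝ) 1) (hcmono : StrictMono c)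
    -- the Lagrange basis polynomials and the Lebesgue constant
    (ℓ : Fin M → ℝ → ℝ)
    (hℓ : ∀ (j : Fin M) (τ : ℝ),
      ℓ j τ = ∏ k ∈ Finset.univ.erase j, (τ - c k) / (c j - c k))
    (Γφ : ℝ) (hΓφ : Γφ = ⨆ τ : Set.Icc (0 : ℝ) 1, ∑ j, |ℓ j (τ : ℝ)|)
    (h : ℝ) (hh : 0 < h) (y : EuclideanSpace ℝ (Fin K × Fin d))
    (W : ℝ → EuclideanSpace ℝ (Fin K × Fin d)) (hW : Continuous W)
    -- `P s X = ∑ⱼ ℓⱼ(s/h)·∇U(X₁(cⱼ h))`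
    (P : ℝ → (ℝ → EuclideanSpace ℝ (Fin K × Fin d)) → EuclideanSpace ℝ (Fin d))
    (hP : ∀ s X, P s X =
      ∑ j, ℓ j (s / h) • gradient U (WithLp.toLp 2 (fun i => X (c j * h) (⟨0, by omega⟩, i))))
    (X Y Xt Yt : ℝ → EuclideanSpace ℝ (Fin K × Fin d))
    (hX : Continuous X) (hY : Continuous Y) (hXt : Continuous Xt) (hYt : Continuous Yt)
    (hXteq : ∀ t ∈ Set.Icc (0 : ℝ) h, Xt t =
      y + (∫ s in (0 : ℝ)..t, Matrix.toEuclideanLin A (Xt s))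
        - (∫ s in (0 : ℝ)..t, emb2 (P s X)) + W t)
    (hYteq : ∀ t ∈ Set.Icc (0 : ℝ) h, Yt t =
      y + (∫ s in (0 : ℝ)..t, Matrix.toEuclideanLin A (Yt s))
        - (∫ s in (0 : ℝ)..t, emb2 (P s Y)) + W t) :
    ∀ t ∈ Set.Icc (0 : ℝ) h,
      ‖Xt t - Yt t‖ ≤
        Real.exp (opNorm A * h) * L * Γφ * h * ⨆ s : Set.Icc (0 : ℝ) h, ‖X s - Y s‖ := by
  classical
  set S := ⨆ s : Set.Icc (0 : ℝ) h, ‖X s - Y s‖ with hSdef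
  have h0mem : (0 : ℝ) ∈ Set.Icc (0 : ℝ) h := ⟨le_refl _, hh.le⟩
  -- sup over [0,h]
  have hSbdd : BddAbove (Set.range fun s : Set.Icc (0 : ℝ) h => ‖X s - Y s‖) :=
    (isCompact_range (((hX.sub hY).comp continuous_subtype_val).norm)).bddAbove
  have hSb : ∀ s ∈ Set.Icc (0 : ℝ) h, ‖X s - Y s‖ ≤ S := fun s hs =>
    le_ciSup hSbdd (⟨s, hs⟩ : Set.Icc (0 : ℝ) h)
  have hS0 : 0 ≤ S := le_trans (norm_nonneg _) (hSb 0 h0mem)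
  -- ℓ continuity and Lebesgue constant
  have hℓcont : ∀ j, Continuous (ℓ j) := by
    intro j
    rw [funext (hℓ j)]
    exact continuous_finset_prod _ fun k _ =>
      (continuous_id.sub continuous_const).div_const _
  have hsumcont : Continuous fun τ : ℝ => ∑ j, |ℓ j τ| :=
    continuous_finset_sum _ fun j _ => (hℓcont j).abs
  have hΓbdd : BddAbove (Set.range fun τ : Set.Icc (0 : ℝ) 1 => ∑ j, |ℓ j (τ : ℝ)|) :=
    (isCompact_range (hsumcont.comp continuous_subtype_val)).bddAbove
  have hΓle : ∀ τ ∈ Set.Icc (0 : ℝ) 1, ∑ j, |ℓ j τ| ≤ Γφ := by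
    intro τ hτ
    rw [hΓφ]
    exact le_ciSup hΓbdd (⟨τ, hτ⟩ : Set.Icc (0 : ℝ) 1)
  have hΓ0 : 0 ≤ Γφ :=
    le_trans (Finset.sum_nonneg fun j _ => abs_nonneg _)
      (hΓle 0 ⟨le_refl _, zero_le_one⟩)
  -- block projection bound
  have hproj : ∀ (w : EuclideanSpace ℝ (Fin K × Fin d)) (i0 : Fin K)
      (v : EuclideanSpace ℝ (Fin d)), (∀ i, v i = w (i0, i)) → ‖v‖ ≤ ‖w‖ := by
    intro w i0 v hv
    rw [EuclideanSpace.norm_eq, EuclideanSpace.norm_eq]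
    apply Real.sqrt_le_sqrt
    calc ∑ i, ‖v i‖ ^ 2 = ∑ i, ‖w (i0, i)‖ ^ 2 := by simp [hv]
      _ ≤ ∑ p : Fin K × Fin d, ‖w p‖ ^ 2 := by
          rw [Fintype.sum_prod_type]
          exact Finset.single_le_sum (f := fun i : Fin K => ∑ j, ‖w (i, j)‖ ^ 2)
            (fun i _ => Finset.sum_nonneg fun j _ => sq_nonneg _) (Finset.mem_univ i0)
  -- emb2 is linear, continuous, norm-preserving
  have hemb_lin : IsLinearMap ℝ emb2 := by
    constructor
    · intro a b
      ext p
      simp only [hemb2, PiLp.add_apply]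
      split <;> simp
    · intro r a
      ext p
      simp only [hemb2, PiLp.smul_apply, smul_eq_mul]
      split <;> simp
  have hembcont : Continuous emb2 := by
    have : emb2 = ⇑(hemb_lin.mk' emb2) := rfl
    rw [this]
    exact (hemb_lin.mk' emb2).continuous_of_finiteDimensional
  have hemb_sub : ∀ a b, emb2 a - emb2 b = emb2 (a - b) := by
    intro a b
    have := (hemb_lin.mk' emb2).map_sub a b
    simpa using this.symm
  have hembnorm : ∀ v, ‖emb2 v‖ = ‖v‖ := by
    intro v
    rw [EuclideanSpace.norm_eq, EuclideanSpace.norm_eq]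
    congr 1
    rw [Fintype.sum_prod_type]
    have : ∀ i : Fin K, (∑ j, ‖emb2 v (i, j)‖ ^ 2) =
        if i = (⟨1, by omega⟩ : Fin K) then ∑ j, ‖v j‖ ^ 2 else 0 := by
      intro i
      by_cases hi : i = (⟨1, by omega⟩ : Fin K)
      · subst hi
        simp [hemb2]
      · have hi' : (i : ℕ) ≠ 1 := by
          intro hc
          exact hi (Fin.ext hc)
        simp [hemb2, hi', hi]
    rw [Finset.sum_congr rfl fun i _ => this i, Finset.sum_ite_eq' Finset.univ]
    simp
  -- norm bound for A
  have hAle : ∀ x, ‖Matrix.toEuclideanLin A x‖ ≤ opNorm A * ‖x‖ := by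
    intro x
    have := (LinearMap.toContinuousLinearMap (Matrix.toEuclideanLin A)).le_opNorm x
    simpa [opNorm] using this
  have hA0 : 0 ≤ opNorm A := norm_nonneg _
  -- continuity of P · X and P · Y
  have hPcont : ∀ Z : ℝ → EuclideanSpace ℝ (Fin K × Fin d),
      Continuous fun s => P s Z := by
    intro Z
    have : (fun s => P s Z) = fun s =>
        ∑ j, ℓ j (s / h) • gradient U (WithLp.toLp 2 (fun i => Z (c j * h) (⟨0, by omega⟩, i))) :=
      funext fun s => hP s Z
    rw [this]
    exact continuous_finset_sum _ fun j _ =>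
      (((hℓcont j).comp (continuous_id.div_const h)).smul continuous_const)
  -- the difference of the interpolants
  have hPdiff : ∀ s ∈ Set.Icc (0 : ℝ) h, ‖P s X - P s Y‖ ≤ Γφ * (L * S) := by
    intro s hs
    rw [hP s X, hP s Y, ← Finset.sum_sub_distrib]
    calc ‖∑ j, (ℓ j (s / h) • gradient U (WithLp.toLp 2 (fun i => X (c j * h) (⟨0, by omega⟩, i))) -
          ℓ j (s / h) • gradient U (WithLp.toLp 2 (fun i => Y (c j * h) (⟨0, by omega⟩, i))))‖
        ≤ ∑ j, ‖ℓ j (s / h) • gradient U (WithLp.toLp 2 (fun i => X (c j * h) (⟨0, by omega⟩, i))) -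
          ℓ j (s / h) • gradient U (WithLp.toLp 2 (fun i => Y (c j * h) (⟨0, by omega⟩, i)))‖ :=
          norm_sum_le _ _
      _ ≤ ∑ j, |ℓ j (s / h)| * (L * S) := by
          apply Finset.sum_le_sum
          intro j _
          rw [← smul_sub, norm_smul, Real.norm_eq_abs]
          apply mul_le_mul_of_nonneg_left _ (abs_nonneg _)
          have hcj : c j * h ∈ Set.Icc (0 : ℝ) h := by
            constructor
            · exact mul_nonneg (hc j).1 hh.le
            · calc c j * h ≤ 1 * h := mul_le_mul_of_nonneg_right (hc j).2 hh.le
                _ = h := one_mul h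
          refine le_trans (hLip (WithLp.toLp 2 (fun i => X (c j * h) (⟨0, by omega⟩, i)))
            (WithLp.toLp 2 (fun i => Y (c j * h) (⟨0, by omega⟩, i)))) ?_
          apply mul_le_mul_of_nonneg_left _ hL.le
          refine le_trans (hproj (X (c j * h) - Y (c j * h)) ⟨0, by omega⟩ _ ?_)
            (hSb _ hcj)
          intro i
          simp [PiLp.sub_apply]
      _ = (∑ j, |ℓ j (s / h)|) * (L * S) := by rw [Finset.sum_mul]
      _ ≤ Γφ * (L * S) := by
          apply mul_le_mul_of_nonneg_right _ (mul_nonneg hL.le hS0)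
          apply hΓle
          constructor
          · exact div_nonneg hs.1 hh.le
          · exact div_le_one_of_le₀ hs.2 hh.le
  -- the difference path and its integral representation
  set g : ℝ → EuclideanSpace ℝ (Fin K × Fin d) := fun s =>
    Matrix.toEuclideanLin A (Xt s - Yt s) - (emb2 (P s X) - emb2 (P s Y)) with hgdef
  have hAcont : Continuous (Matrix.toEuclideanLin A) :=
    (Matrix.toEuclideanLin A).continuous_of_finiteDimensional
  have hgcont : Continuous g :=
    (hAcont.comp (hXt.sub hYt)).sub
      ((hembcont.comp (hPcont X)).sub (hembcont.comp (hPcont Y)))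
  have hZeq : ∀ t ∈ Set.Icc (0 : ℝ) h, Xt t - Yt t = ∫ s in (0 : ℝ)..t, g s := by
    intro t ht
    have iAX : IntervalIntegrable (fun s => Matrix.toEuclideanLin A (Xt s)) MeasureTheory.volume 0 t :=
      (hAcont.comp hXt).intervalIntegrable 0 t
    have iAY : IntervalIntegrable (fun s => Matrix.toEuclideanLin A (Yt s)) MeasureTheory.volume 0 t :=
      (hAcont.comp hYt).intervalIntegrable 0 t
    have iPX : IntervalIntegrable (fun s => emb2 (P s X)) MeasureTheory.volume 0 t :=
      (hembcont.comp (hPcont X)).intervalIntegrable 0 t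
    have iPY : IntervalIntegrable (fun s => emb2 (P s Y)) MeasureTheory.volume 0 t :=
      (hembcont.comp (hPcont Y)).intervalIntegrable 0 t
    have h1 : (∫ s in (0 : ℝ)..t, Matrix.toEuclideanLin A (Xt s)) -
        (∫ s in (0 : ℝ)..t, Matrix.toEuclideanLin A (Yt s)) =
        ∫ s in (0 : ℝ)..t, Matrix.toEuclideanLin A (Xt s - Yt s) := by
      rw [← intervalIntegral.integral_sub iAX iAY]
      simp only [map_sub]
    have h2 : (∫ s in (0 : ℝ)..t, emb2 (P s X)) -
        (∫ s in (0 : ℝ)..t, emb2 (P s Y)) =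
        ∫ s in (0 : ℝ)..t, (emb2 (P s X) - emb2 (P s Y)) :=
      (intervalIntegral.integral_sub iPX iPY).symm
    have h3 : (∫ s in (0 : ℝ)..t, g s) =
        (∫ s in (0 : ℝ)..t, Matrix.toEuclideanLin A (Xt s - Yt s)) -
        ∫ s in (0 : ℝ)..t, (emb2 (P s X) - emb2 (P s Y)) := by
      rw [hgdef]
      exact intervalIntegral.integral_sub ((hAcont.comp (hXt.sub hYt)).intervalIntegrable 0 t)
        (((hembcont.comp (hPcont X)).sub (hembcont.comp (hPcont Y))).intervalIntegrable 0 t)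
    rw [hXteq t ht, hYteq t ht, h3, ← h1, ← h2]
    abel
  -- the integral function
  set f : ℝ → EuclideanSpace ℝ (Fin K × Fin d) := fun t => ∫ s in (0 : ℝ)..t, g s with hfdef
  have hfderiv : ∀ t : ℝ, HasDerivAt f (g t) t := by
    intro t
    exact intervalIntegral.integral_hasDerivAt_right (hgcont.intervalIntegrable 0 t)
      (hgcont.aestronglyMeasurable.stronglyMeasurableAtFilter) hgcont.continuousAt
  have hfcont : Continuous f := by
    apply continuous_iff_continuousAt.2
    intro t
    exact (hfderiv t).continuousAt
  -- Grönwall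
  have key : ∀ t ∈ Set.Icc (0 : ℝ) h,
      ‖f t‖ ≤ gronwallBound 0 (opNorm A) (Γφ * (L * S)) (t - 0) := by
    apply norm_le_gronwallBound_of_norm_deriv_right_le (f' := g)
    · exact hfcont.continuousOn
    · intro s hs
      exact (hfderiv s).hasDerivWithinAt
    · simp [hfdef]
    · intro s hs
      have hsIcc : s ∈ Set.Icc (0 : ℝ) h := ⟨hs.1, hs.2.le⟩
      calc ‖g s‖ ≤ ‖Matrix.toEuclideanLin A (Xt s - Yt s)‖ +
            ‖emb2 (P s X) - emb2 (P s Y)‖ := norm_sub_le _ _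
        _ ≤ opNorm A * ‖f s‖ + Γφ * (L * S) := by
            apply add_le_add
            · have hfs : f s = Xt s - Yt s := (hZeq s hsIcc).symm
              rw [hfs]
              exact hAle _
            · rw [hemb_sub, hembnorm]
              exact hPdiff s hsIcc
  intro t ht
  calc ‖Xt t - Yt t‖ = ‖f t‖ := congrArg norm (hZeq t ht)
    _ ≤ gronwallBound 0 (opNorm A) (Γφ * (L * S)) t := by
        have := key t ht
        rwa [sub_zero] at this
    _ ≤ Real.exp (opNorm A * h) * (Γφ * (L * S)) * h :=
        gronwall_aux _ _ _ _ hA0 (mul_nonneg hΓ0 (mul_nonneg hL.le hS0)) ht.1 ht.2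
    _ = Real.exp (opNorm A * h) * L * Γφ * h * S := by ring
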